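/- Let (G, τ) be a Hausdorff SIN paratopological group. If G is locally countable (i.e., the identity has a countable open neighborhood), then G is submetrizable. -/

import Mathlib

open Topology Filter Set Uniformity

/-- A first countable T1 topological group is metrizable (auxiliary). -/
theorem aux_metrizable {G : Type*} [Group G] [t' : TopologicalSpace G] [IsTopologicalGroup G]
    [(𝓝 (1 : G)).IsCountablyGenerated] (h : IsClosed ({1} : Set G)) :
    TopologicalSpace.MetrizableSpace G := by
  haveI : T1Space G := IsTopologicalGroup.t1Space G h
  letI u : UniformSpace G := IsTopologicalGroup.rightUniformSpace G
  haveI : (𝓤 G).IsCountablyGenerated := by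
    show (Filter.comap (fun p : G × G => p.2 * p.1⁻¹) (𝓝 (1 : G))).IsCountablyGenerated
    exact Filter.comap.isCountablyGenerated _ _
  exact UniformSpace.metrizableSpace

theorem hausdorff_SIN_locallyCountable_paratopological_group_submetrizable
    {G : Type*} [Group G] [t : TopologicalSpace G] [T2Space G] [ContinuousMul G]
    (hSIN : ∀ U ∈ 𝓝 (1 : G), ∃ V ∈ 𝓝 (1 : G), ∀ x : G, ∀ v ∈ V, x * v * x⁻¹ ∈ U)
    (hloc : ∃ U : Set G, IsOpen U ∧ (1 : G) ∈ U ∧ U.Countable) :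
    ∃ t' : TopologicalSpace G, t ≤ t' ∧ @TopologicalSpace.MetrizableSpace G t' := by
  classical
  obtain ⟨U₀, hU₀open, hU₀mem, hU₀cnt⟩ := hloc
  have hU₀nhds : U₀ ∈ 𝓝 (1 : G) := hU₀open.mem_nhds hU₀mem
  -- the symmetrized set `W * W⁻¹`
  set Q : Set G → Set G := fun W => Set.image2 (fun a b => a * b⁻¹) W W with hQdef
  have hQmem : ∀ (W : Set G) (x : G), x ∈ Q W ↔ ∃ a ∈ W, ∃ b ∈ W, a * b⁻¹ = x := by
    intro W x; exact Set.mem_image2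
  have hQmono : ∀ {W W' : Set G}, W ⊆ W' → Q W ⊆ Q W' := by
    intro W W' h; exact Set.image2_subset h h
  have hQone : ∀ {W : Set G}, (1 : G) ∈ W → (1 : G) ∈ Q W := by
    intro W h; exact (hQmem W 1).mpr ⟨1, h, 1, h, by group⟩
  have hQsub : ∀ {W : Set G}, (1 : G) ∈ W → W ⊆ Q W := by
    intro W h x hx; exact (hQmem W x).mpr ⟨x, hx, 1, h, by group⟩
  have hQsymm : ∀ {W : Set G} {x : G}, x ∈ Q W → x⁻¹ ∈ Q W := by
    intro W x hx
    obtain ⟨a, ha, b, hb, rfl⟩ := (hQmem W x).mp hx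
    exact (hQmem W _).mpr ⟨b, hb, a, ha, by group⟩
  -- T2 separation: a point `g ≠ 1` misses `Q W` for a suitable nbhd `W` of `1`
  have hsepA : ∀ g : G, ∃ W, W ∈ 𝓝 (1 : G) ∧ (g ≠ 1 → g ∉ Q W) := by
    intro g
    rcases eq_or_ne g 1 with rfl | hg
    · exact ⟨Set.univ, Filter.univ_mem, fun h => absurd rfl h⟩
    · obtain ⟨Ug, Vg, hUo, hVo, hgU, h1V, hdisj⟩ := t2_separation hg
      refine ⟨{w | g * w ∈ Ug} ∩ Vg, ?_, fun _ hmem => ?_⟩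
      · refine Filter.inter_mem ?_ (hVo.mem_nhds h1V)
        have hco : ContinuousAt (fun w => g * w) (1 : G) := (continuous_mul_left g).continuousAt
        exact hco.preimage_mem_nhds (by simpa using hUo.mem_nhds hgU)
      · obtain ⟨a, ha, b, hb, hab⟩ := (hQmem _ g).mp hmem
        have hgb : g * b = a := by rw [← hab]; group
        have haU : a ∈ Ug := hgb ▸ hb.1
        exact Set.disjoint_left.mp hdisj haU ha.2
  choose A hA1 hA2 using hsepA
  -- enumerate the countable set `S = Q U₀`
  have hScnt : (Q U₀).Countable := hU₀cnt.image2 hU₀cnt _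
  have hS1 : (1 : G) ∈ Q U₀ := hQone hU₀mem
  obtain ⟨e, he⟩ := hScnt.exists_eq_range ⟨1, hS1⟩
  set AN : ℕ → Set G := fun n => A (e n) ∩ U₀ with hANdef
  have hAN : ∀ n, AN n ∈ 𝓝 (1 : G) := fun n => Filter.inter_mem (hA1 (e n)) hU₀nhds
  -- the recursive shrinking step
  have step : ∀ K : Set G, K ∈ 𝓝 (1 : G) → ∃ D, D ∈ 𝓝 (1 : G) ∧ D ⊆ K ∧
      (∀ p ∈ Q D, ∀ q ∈ Q D, p * q ∈ Q K) ∧ (∀ x : G, ∀ p ∈ Q D, x * p * x⁻¹ ∈ Q K) := by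
    intro K hK
    obtain ⟨E, hE, hEsplit⟩ := exists_nhds_one_split hK
    have hE1 : (1 : G) ∈ E := mem_of_mem_nhds hE
    have hEK : E ⊆ K := fun x hx => by simpa using hEsplit x hx 1 hE1
    obtain ⟨V, hV, hVconj⟩ := hSIN E hE
    refine ⟨V ∩ E, Filter.inter_mem hV hE, fun x hx => hEK hx.2, ?_, ?_⟩
    · intro p hp q hq
      obtain ⟨d₁, hd₁, d₂, hd₂, rfl⟩ := (hQmem _ p).mp hp
      obtain ⟨d₃, hd₃, d₄, hd₄, rfl⟩ := (hQmem _ q).mp hq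
      have he' : d₂⁻¹ * d₃ * d₂⁻¹⁻¹ ∈ E := hVconj d₂⁻¹ d₃ hd₃.1
      refine (hQmem _ _).mpr ⟨d₁ * (d₂⁻¹ * d₃ * d₂⁻¹⁻¹), hEsplit _ hd₁.2 _ he',
        d₄ * d₂, hEsplit _ hd₄.2 _ hd₂.2, by group⟩
    · intro x p hp
      obtain ⟨d₁, hd₁, d₂, hd₂, rfl⟩ := (hQmem _ p).mp hp
      exact (hQmem _ _).mpr ⟨x * d₁ * x⁻¹, hEK (hVconj x d₁ hd₁.1),
        x * d₂ * x⁻¹, hEK (hVconj x d₂ hd₂.1), by group⟩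
  choose! D hD1 hD2 hD3 hD4 using step
  -- the recursive sequence
  set C : ℕ → Set G := fun n => Nat.rec U₀ (fun n Cn => D (Cn ∩ AN n)) n with hCdef
  have hCsucc : ∀ n, C (n + 1) = D (C n ∩ AN n) := fun n => rfl
  have hC : ∀ n, C n ∈ 𝓝 (1 : G) := by
    intro n
    induction n with
    | zero => exact hU₀nhds
    | succ n ih => rw [hCsucc]; exact hD1 _ (Filter.inter_mem ih (hAN n))
  have hKmem : ∀ n, C n ∩ AN n ∈ 𝓝 (1 : G) := fun n => Filter.inter_mem (hC n) (hAN n)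
  set Bs : ℕ → Set G := fun n => Q (C n) with hBdef
  have hC1 : ∀ n, (1 : G) ∈ C n := fun n => mem_of_mem_nhds (hC n)
  have hB1 : ∀ n, (1 : G) ∈ Bs n := fun n => hQone (hC1 n)
  have hBsubK : ∀ n, Bs (n + 1) ⊆ Q (C n ∩ AN n) := by
    intro n; rw [hBdef]; exact hQmono (by rw [hCsucc]; exact hD2 _ (hKmem n))
  have hBstep : ∀ n, Bs (n + 1) ⊆ Bs n := fun n =>
    (hBsubK n).trans (hQmono Set.inter_subset_left)
  have hBanti : ∀ m n, m ≤ n → Bs n ⊆ Bs m := fun m n h =>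
    antitone_nat_of_succ_le (fun k => hBstep k) h
  have hBmul : ∀ n, ∀ p ∈ Bs (n + 1), ∀ q ∈ Bs (n + 1), p * q ∈ Bs n := by
    intro n p hp q hq
    have h := hD3 _ (hKmem n) p (by rw [← hCsucc] at *; exact hp) q
      (by rw [← hCsucc] at *; exact hq)
    exact hQmono Set.inter_subset_left h
  have hBconj : ∀ n, ∀ x : G, ∀ p ∈ Bs (n + 1), x * p * x⁻¹ ∈ Bs n := by
    intro n x p hp
    have h := hD4 _ (hKmem n) x p (by rw [← hCsucc] at *; exact hp)
    exact hQmono Set.inter_subset_left h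
  have hBA : ∀ n, Bs (n + 1) ⊆ Q (A (e n)) := fun n =>
    (hBsubK n).trans (hQmono (Set.inter_subset_right.trans Set.inter_subset_left))
  have hBS : ∀ n, Bs (n + 1) ⊆ Q U₀ := fun n =>
    (hBsubK n).trans (hQmono (Set.inter_subset_right.trans Set.inter_subset_right))
  -- the intersection of the `Bs n` is trivial
  have hcap : ∀ g : G, (∀ n, g ∈ Bs n) → g = 1 := by
    intro g hg
    by_contra hne
    have hgS : g ∈ Q U₀ := hBS 0 (hg 1)
    obtain ⟨m, rfl⟩ : ∃ m, e m = g := by rwa [he, Set.mem_range] at hgS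
    exact hA2 (e m) hne (hBA m (hg (m + 1)))
  -- the group filter basis
  set FB0 : FilterBasis G :=
    { sets := Set.range Bs
      nonempty := ⟨Bs 0, Set.mem_range_self 0⟩
      inter_sets := by
        rintro _ _ ⟨m, rfl⟩ ⟨n, rfl⟩
        exact ⟨Bs (max m n), Set.mem_range_self _,
          Set.subset_inter (hBanti m _ (le_max_left m n)) (hBanti n _ (le_max_right m n))⟩ }
    with hFB0def
  have hFB0mem : ∀ {V : Set G}, V ∈ FB0.sets → ∃ n, Bs n = V := fun hV => hV
  have hFB0mem' : ∀ n, Bs n ∈ FB0.sets := fun n => Set.mem_range_self n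
  set FB : GroupFilterBasis G :=
    { toFilterBasis := FB0
      one' := by
        intro U hU
        obtain ⟨n, rfl⟩ := hFB0mem hU
        exact hB1 n
      mul' := by
        intro U hU
        obtain ⟨n, rfl⟩ := hFB0mem hU
        refine ⟨Bs (n + 1), hFB0mem' (n + 1), ?_⟩
        rintro x hx
        rw [Set.mem_mul] at hx
        obtain ⟨p, hp, q, hq, rfl⟩ := hx
        exact hBmul n p hp q hq
      inv' := by
        intro U hU
        obtain ⟨n, rfl⟩ := hFB0mem hU
        exact ⟨Bs n, hFB0mem' n, fun x hx => hQsymm hx⟩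
      conj' := by
        intro x₀ U hU
        obtain ⟨n, rfl⟩ := hFB0mem hU
        exact ⟨Bs (n + 1), hFB0mem' (n + 1), fun p hp => hBconj n x₀ p hp⟩ } with hFBdef
  refine ⟨FB.topology, ?_, ?_⟩
  · -- coarser
    rw [le_iff_nhds]
    intro x
    refine (FB.nhds_hasBasis x).ge_iff.mpr ?_
    rintro V hV
    obtain ⟨n, rfl⟩ := hFB0mem hV
    have hBn : Bs n ∈ 𝓝 (1 : G) := Filter.mem_of_superset (hC n) (hQsub (hC1 n))
    have himg : (fun y => x * y) '' Bs n = (fun y => x⁻¹ * y) ⁻¹' Bs n := by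
      ext y
      constructor
      · rintro ⟨v, hv, rfl⟩; simpa using hv
      · intro hy; exact ⟨x⁻¹ * y, hy, by group⟩
    rw [himg]
    have hco : ContinuousAt (fun y => x⁻¹ * y) x := (continuous_mul_left x⁻¹).continuousAt
    exact hco.preimage_mem_nhds (by rw [inv_mul_cancel]; exact hBn)
  · -- metrizable
    have hb : (@nhds G FB.topology 1).HasBasis (fun _ : ℕ => True) Bs := by
      refine FB.nhds_one_hasBasis.to_hasBasis ?_ ?_
      · intro V hV
        obtain ⟨n, rfl⟩ := hFB0mem hV
        exact ⟨n, trivial, subset_rfl⟩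
      · intro n _
        exact ⟨Bs n, hFB0mem' n, subset_rfl⟩
    have hcg : (@nhds G FB.topology 1).IsCountablyGenerated := hb.isCountablyGenerated
    have hclosed : @IsClosed G FB.topology {1} := by
      rw [← @isOpen_compl_iff G _ FB.topology]
      rw [@isOpen_iff_mem_nhds G FB.topology]
      intro x hx
      have hxne : x ≠ 1 := hx
      obtain ⟨n, hn⟩ : ∃ n, x ∉ Bs n := by
        by_contra h
        push_neg at h
        exact hxne (hcap x h)
      refine (FB.nhds_hasBasis x).mem_iff.mpr ⟨Bs n, hFB0mem' n, ?_⟩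
      rintro _ ⟨v, hv, rfl⟩ h1
      have hxv : x * v = 1 := h1
      have hx2 : x ∈ Bs n := by
        have hvinv := hQsymm hv
        rwa [inv_eq_of_mul_eq_one_left hxv] at hvinv
      exact hn hx2
    exact @aux_metrizable G _ FB.topology FB.isTopologicalGroup hcg hclosed
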